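/- For all i ≥ 1, the Fibonacci polynomial F_i(x) equals the sum over j from 0 to i, restricted to indices j with i + j odd, of ((i+j-1)/2)! / (j! · ((i-j-1)/2)!) · x^j. -/

import Mathlib

noncomputable def fibPoly : ℕ → Polynomial ℝ
  | 0 => 0
  | 1 => 1
  | n + 2 => Polynomial.X * fibPoly (n + 1) + fibPoly n

lemma chooseAux (n k : ℕ) :
    (n + 1 - k).choose (k + 1) = (n - k).choose k + (n - k).choose (k + 1) := by
  rcases le_or_gt k n with h | h
  · have : n + 1 - k = (n - k) + 1 := by omega
    rw [this, Nat.choose_succ_succ]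
  · have h2 : n - k = 0 := by omega
    rw [h2]
    rw [Nat.choose_eq_zero_of_lt (by omega), Nat.choose_eq_zero_of_lt (by omega),
      Nat.choose_eq_zero_of_lt (by omega)]

lemma fibA (x : ℝ) (n : ℕ) :
    (fibPoly (n + 1)).eval x =
      ∑ k ∈ Finset.range (n + 1), ((n - k).choose k : ℝ) * x ^ (n - 2 * k) := by
  induction n using Nat.strong_induction_on with
  | _ n ih =>
    match n with
    | 0 => simp [fibPoly]
    | 1 => simp [fibPoly, Finset.sum_range_succ]
    | n + 2 =>
      have h1 := ih (n + 1) (by omega)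
      have h0 := ih n (by omega)
      show (Polynomial.X * fibPoly (n + 2) + fibPoly (n + 1)).eval x = _
      rw [Polynomial.eval_add, Polynomial.eval_mul, Polynomial.eval_X, h1, h0]
      have stepA : x * ∑ k ∈ Finset.range (n + 2), ((n + 1 - k).choose k : ℝ) * x ^ (n + 1 - 2 * k)
          = ∑ k ∈ Finset.range (n + 2), ((n + 1 - k).choose k : ℝ) * x ^ (n + 2 - 2 * k) := by
        rw [Finset.mul_sum]
        refine Finset.sum_congr rfl fun k _ => ?_
        by_cases h : 2 * k ≤ n + 1
        · have e : n + 2 - 2 * k = (n + 1 - 2 * k) + 1 := by omega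
          rw [e, pow_succ]; ring
        · rw [Nat.choose_eq_zero_of_lt (by omega)]; simp
      rw [stepA]
      rw [Finset.sum_range_succ' (fun k => ((n + 2 - k).choose k : ℝ) * x ^ (n + 2 - 2 * k)) (n + 2)]
      rw [Finset.sum_range_succ' (fun k => ((n + 1 - k).choose k : ℝ) * x ^ (n + 2 - 2 * k)) (n + 1)]
      have e1 : ∀ k, n + 2 - (k + 1) = n + 1 - k := by omega
      have e2 : ∀ k, n + 2 - 2 * (k + 1) = n - 2 * k := by omega
      have e3 : ∀ k, n + 1 - (k + 1) = n - k := by omega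
      simp only [e1, e2, e3, chooseAux, Nat.cast_add]
      rw [Finset.sum_range_succ (fun k => ((((n - k).choose k : ℕ) : ℝ) + ((n - k).choose (k+1) : ℕ)) * x ^ (n - 2 * k)) (n + 1)]
      rw [Nat.choose_eq_zero_of_lt (show n - (n+1) < n + 1 by omega),
        Nat.choose_eq_zero_of_lt (show n - (n+1) < n + 2 by omega)]
      push_cast
      simp only [add_mul, Finset.sum_add_distrib]
      simp only [Nat.choose_zero_right, Nat.cast_one, zero_mul, add_zero, one_mul]
      ring

lemma fibB (x : ℝ) (n : ℕ) :
    ∑ j ∈ (Finset.range (n + 1 + 1)).filter (fun j => Odd (n + 1 + j)),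
        ((Nat.factorial ((n + 1 + j - 1) / 2) : ℝ) /
          ((Nat.factorial j : ℝ) * (Nat.factorial ((n + 1 - j - 1) / 2) : ℝ))) * x ^ j
    = ∑ k ∈ Finset.range (n / 2 + 1), ((n - k).choose k : ℝ) * x ^ (n - 2 * k) := by
  refine Finset.sum_nbij' (fun j => (n - j) / 2) (fun k => n - 2 * k) ?_ ?_ ?_ ?_ ?_
  · intro j hj
    simp only [Finset.mem_filter, Finset.mem_range, Nat.odd_iff] at hj ⊢
    omega
  · intro k hk
    simp only [Finset.mem_filter, Finset.mem_range, Nat.odd_iff] at hk ⊢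
    omega
  · intro j hj
    simp only [Finset.mem_filter, Finset.mem_range, Nat.odd_iff] at hj
    beta_reduce
    omega
  · intro k hk
    simp only [Finset.mem_range] at hk
    beta_reduce
    omega
  · intro j hj
    simp only [Finset.mem_filter, Finset.mem_range, Nat.odd_iff] at hj
    obtain ⟨hj1, hj2⟩ := hj
    beta_reduce
    have e2 : n - 2 * ((n - j) / 2) = j := by omega
    have hle : j ≤ (n + 1 + j - 1) / 2 := by omega
    have e3 : (n + 1 + j - 1) / 2 - j = (n + 1 - j - 1) / 2 := by omega
    have e4 : (n - (n - j) / 2).choose ((n - j) / 2) = ((n + 1 + j - 1) / 2).choose j := by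
      rw [show n - (n - j) / 2 = (n + 1 + j - 1) / 2 by omega,
        ← Nat.choose_symm (show (n - j) / 2 ≤ (n + 1 + j - 1) / 2 by omega)]
      congr 1
      omega
    rw [e2, e4, Nat.cast_choose ℝ hle, e3]

theorem fibPoly_factorial_form (i : ℕ) (hi : 1 ≤ i) (x : ℝ) :
    (fibPoly i).eval x =
      ∑ j ∈ (Finset.range (i + 1)).filter (fun j => Odd (i + j)),
        ((Nat.factorial ((i + j - 1) / 2) : ℝ) /
          ((Nat.factorial j : ℝ) * (Nat.factorial ((i - j - 1) / 2) : ℝ))) * x ^ j := by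
  obtain ⟨n, rfl⟩ : ∃ n, i = n + 1 := ⟨i - 1, by omega⟩
  rw [fibA x n, fibB x n]
  symm
  apply Finset.sum_subset
  · intro k hk
    simp only [Finset.mem_range] at hk ⊢
    omega
  · intro k _ hk2
    simp only [Finset.mem_range] at hk2
    rw [Nat.choose_eq_zero_of_lt (by omega)]
    simp
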